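/- Let δ = √(8/3). If s points x_1,...,x_s in ℝ^ℓ satisfy ‖x_i − x_{i'}‖ > δ·α for all i ≠ i' (α > 0), and there is a point j ∈ ℝ^ℓ with ‖j − x_i‖ < α for all i, then s ≤ 3. -/

import Mathlib

theorem kmedian_at_most_three (ℓ s : ℕ) (α : ℝ) (hα : 0 < α)
    (x : Fin s → EuclideanSpace ℝ (Fin ℓ)) (j : EuclideanSpace ℝ (Fin ℓ))
    (hsep : ∀ i i' : Fin s, i ≠ i' → Real.sqrt (8 / 3) * α < ‖x i - x i'‖)
    (hclose : ∀ i, ‖j - x i‖ < α) :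
    s ≤ 3 := by
  by_contra hs
  push_neg at hs
  have hs4 : 4 ≤ s := hs
  set v : Fin s → EuclideanSpace ℝ (Fin ℓ) := fun i => x i - j with hv
  have hvd : ∀ i i' : Fin s, v i - v i' = x i - x i' := by
    intro i i'; simp only [hv]; abel
  -- upper bound on sum of squared norms
  have hne : (Finset.univ : Finset (Fin s)).Nonempty := by
    refine Finset.univ_nonempty_iff.mpr ?_
    exact Fin.pos_iff_nonempty.mp (by omega)
  have hnorm : ∀ i, ‖v i‖ ^ 2 < α ^ 2 := by
    intro i
    have h1 : ‖v i‖ = ‖j - x i‖ := by rw [hv]; exact norm_sub_rev _ _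
    have := hclose i
    nlinarith [norm_nonneg (v i)]
  have hupper : ∑ i, ‖v i‖ ^ 2 < (s : ℝ) * α ^ 2 := by
    calc ∑ i, ‖v i‖ ^ 2 < ∑ _i : Fin s, α ^ 2 :=
          Finset.sum_lt_sum_of_nonempty hne fun i _ => hnorm i
      _ = (s : ℝ) * α ^ 2 := by simp [mul_comm]
  -- key identity / inequality
  have key : ∑ i, ∑ i', ‖v i - v i'‖ ^ 2 ≤ 2 * (s : ℝ) * ∑ i, ‖v i‖ ^ 2 := by
    have expand : ∀ i i' : Fin s, ‖v i - v i'‖ ^ 2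
        = ‖v i‖ ^ 2 + ‖v i'‖ ^ 2 - 2 * (inner ℝ (v i) (v i') : ℝ) := by
      intro i i'
      rw [@norm_sub_sq_real]
      ring
    have hsum : ∑ i, ∑ i', ‖v i - v i'‖ ^ 2
        = 2 * (s : ℝ) * ∑ i, ‖v i‖ ^ 2 - 2 * ‖∑ i, v i‖ ^ 2 := by
      have : ∑ i, ∑ i', ‖v i - v i'‖ ^ 2
          = ∑ i, ((s : ℝ) * ‖v i‖ ^ 2 + (∑ i', ‖v i'‖ ^ 2)
              - 2 * (inner ℝ (v i) (∑ i', v i') : ℝ)) := by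
        refine Finset.sum_congr rfl fun i _ => ?_
        rw [inner_sum]
        simp only [expand]
        rw [Finset.sum_sub_distrib, Finset.sum_add_distrib, Finset.mul_sum]
        simp [Finset.card_univ, mul_comm]
      rw [this, Finset.sum_sub_distrib, Finset.sum_add_distrib]
      rw [← Finset.mul_sum, ← Finset.mul_sum, ← sum_inner, real_inner_self_eq_norm_sq,
        Finset.sum_const, Finset.card_univ, Fintype.card_fin, nsmul_eq_mul]
      ring
    rw [hsum]
    nlinarith [sq_nonneg ‖∑ i, v i‖]
  -- lower bound via off-diagonal pairs
  have hterm : ∀ p ∈ (Finset.univ : Finset (Fin s × Fin s)).filter (fun p => p.1 ≠ p.2),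
      8 / 3 * α ^ 2 < ‖v p.1 - v p.2‖ ^ 2 := by
    intro p hp
    have hne' : p.1 ≠ p.2 := (Finset.mem_filter.mp hp).2
    have h := hsep p.1 p.2 hne'
    rw [hvd]
    have hsq : (Real.sqrt (8 / 3) * α) ^ 2 = 8 / 3 * α ^ 2 := by
      rw [mul_pow, Real.sq_sqrt (by norm_num : (8:ℝ)/3 ≥ 0)]
    have h0 : 0 ≤ Real.sqrt (8 / 3) * α := by positivity
    nlinarith
  have hcard : ((Finset.univ : Finset (Fin s × Fin s)).filter (fun p => p.1 ≠ p.2)).card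
      = s * s - s := by
    have : (Finset.univ : Finset (Fin s × Fin s)).filter (fun p => p.1 ≠ p.2)
        = (Finset.univ : Finset (Fin s)).offDiag := by
      ext p
      simp [Finset.mem_offDiag]
    rw [this, Finset.offDiag_card]
    simp [Finset.card_univ]
  have hfne : ((Finset.univ : Finset (Fin s × Fin s)).filter (fun p => p.1 ≠ p.2)).Nonempty := by
    refine ⟨(⟨0, by omega⟩, ⟨1, by omega⟩), ?_⟩
    simp [Fin.ext_iff]
  have hlow : ((s * s - s : ℕ) : ℝ) * (8 / 3 * α ^ 2)
      < ∑ i, ∑ i', ‖v i - v i'‖ ^ 2 := by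
    have h1 : ((s * s - s : ℕ) : ℝ) * (8 / 3 * α ^ 2)
        < ∑ p ∈ (Finset.univ : Finset (Fin s × Fin s)).filter (fun p => p.1 ≠ p.2),
            ‖v p.1 - v p.2‖ ^ 2 := by
      calc ((s * s - s : ℕ) : ℝ) * (8 / 3 * α ^ 2)
          = ∑ _p ∈ (Finset.univ : Finset (Fin s × Fin s)).filter (fun p => p.1 ≠ p.2),
              8 / 3 * α ^ 2 := by rw [Finset.sum_const, hcard]; simp [nsmul_eq_mul]
        _ < _ := Finset.sum_lt_sum_of_nonempty hfne hterm
    have h2 : ∑ p ∈ (Finset.univ : Finset (Fin s × Fin s)).filter (fun p => p.1 ≠ p.2),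
        ‖v p.1 - v p.2‖ ^ 2 ≤ ∑ p : Fin s × Fin s, ‖v p.1 - v p.2‖ ^ 2 := by
      exact Finset.sum_le_sum_of_subset_of_nonneg (Finset.filter_subset _ _)
        (fun p _ _ => by positivity)
    have h3 : ∑ p : Fin s × Fin s, ‖v p.1 - v p.2‖ ^ 2
        = ∑ i, ∑ i', ‖v i - v i'‖ ^ 2 := by
      rw [← Finset.sum_product']
      rfl
    linarith
  -- combine
  have hcast : ((s * s - s : ℕ) : ℝ) = (s : ℝ) * s - s := by
    have : s ≤ s * s := Nat.le_mul_of_pos_left s (by omega)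
    push_cast [Nat.cast_sub this]
    ring
  rw [hcast] at hlow
  have hsR : (4 : ℝ) ≤ (s : ℝ) := by exact_mod_cast hs4
  have hspos : (0 : ℝ) < 2 * (s : ℝ) := by linarith
  have h5 : 2 * (s : ℝ) * ∑ i, ‖v i‖ ^ 2 < 2 * (s : ℝ) * ((s : ℝ) * α ^ 2) := by
    have := mul_lt_mul_of_pos_left hupper hspos
    linarith [this]
  have h6 : ((s : ℝ) * s - s) * (8 / 3 * α ^ 2) < 2 * (s : ℝ) * ((s : ℝ) * α ^ 2) := by
    linarith
  have h7 : 0 ≤ ((s : ℝ) - 4) * ((s : ℝ) * α ^ 2) :=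
    mul_nonneg (by linarith) (by positivity)
  nlinarith [h6, h7, hα]
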